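/- Let n ≥ 2 be an integer, set a = −2 − n, and let λ = −a/2 + √(a²/4 − 2) ∈ ℝ. Then λ > 0, λ is irrational, λ is an algebraic integer whose minimal polynomial over ℚ is T² + aT + 2, and ℤ[λ]/(1−λ)ℤ[λ] ≅ ℤ/(n−1)ℤ as abelian groups. -/

import Mathlib

open Polynomial

/-- **Statement 17.** Let `n ≥ 2` be an integer, set `a = −2 − n`, and let
`λ = −a/2 + √(a²/4 − 2) ∈ ℝ`.  Then `λ > 0`, `λ` is irrational, `λ` is an algebraic
integer whose minimal polynomial over `ℚ` is `T² + aT + 2`, and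
`ℤ[λ]/(1−λ)ℤ[λ] ≅ ℤ/(n−1)ℤ` as abelian groups, where `ℤ[λ]` is the subring of `ℝ`
generated by `λ` and `(1−λ)ℤ[λ] = {(1−λ)x : x ∈ ℤ[λ]}`. -/
theorem cuntz_algebra_parameter (n : ℕ) (hn : 2 ≤ n) (a : ℤ) (ha : a = -2 - n)
    (lam : ℝ) (hlam : lam = -(a : ℝ) / 2 + Real.sqrt ((a : ℝ) ^ 2 / 4 - 2)) :
    0 < lam ∧ Irrational lam ∧ IsIntegral ℤ lam ∧
    minpoly ℚ lam = X ^ 2 + C (a : ℚ) * X + C 2 ∧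
    Nonempty
      ((↥(Subring.closure {lam}) ⧸
          (AddMonoidHom.mulLeft
            (1 - (⟨lam, Subring.subset_closure (Set.mem_singleton lam)⟩ :
              Subring.closure {lam}))).range) ≃+
        ZMod (n - 1)) := by
  have hn2 : (2:ℝ) ≤ (n:ℝ) := by exact_mod_cast hn
  have haR : (a:ℝ) = -2 - (n:ℝ) := by rw [ha]; push_cast; ring
  have hd0 : (0:ℝ) ≤ (a:ℝ)^2/4 - 2 := by nlinarith
  have hsq : (Real.sqrt ((a:ℝ)^2/4 - 2))^2 = (a:ℝ)^2/4 - 2 := Real.sq_sqrt hd0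
  have hsnn : 0 ≤ Real.sqrt ((a:ℝ)^2/4 - 2) := Real.sqrt_nonneg _
  have hroot : lam^2 + (a:ℝ)*lam + 2 = 0 := by
    rw [hlam]; linear_combination hsq
  have hsq' : (Real.sqrt ((a:ℝ)^2/4 - 2))^2 = ((n:ℝ)+2)^2/4 - 2 := by
    rw [hsq, haR]; ring
  have hub : lam < (n:ℝ) + 2 := by
    have hs : Real.sqrt ((a:ℝ)^2/4 - 2) < (n:ℝ)/2 + 1 := by nlinarith [hsq', hsnn]
    rw [hlam]; linarith [haR]
  have hlb : (n:ℝ) + 1 < lam := by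
    have hs : (n:ℝ)/2 < Real.sqrt ((a:ℝ)^2/4 - 2) := by nlinarith [hsq', hsnn]
    rw [hlam]; linarith [haR]
  have hpos : 0 < lam := by linarith
  -- the integer polynomial
  have hgZmon : (X^2 + C a * X + C 2 : ℤ[X]).Monic := by monicity!
  have hgZval : aeval lam (X^2 + C a * X + C 2 : ℤ[X]) = 0 := by
    simp only [map_add, map_mul, map_pow, aeval_X, aeval_C, algebraMap_int_eq, eq_intCast, map_intCast, map_ofNat]
    push_cast
    linear_combination hroot
  have hintZ : IsIntegral ℤ lam := ⟨X^2 + C a * X + C 2, hgZmon, by rw [← aeval_def]; exact hgZval⟩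
  -- irrationality
  have hirr : Irrational lam := by
    rintro ⟨q, hq⟩
    have hq0 : aeval (q:ℝ) (X^2 + C a * X + C 2 : ℤ[X]) = 0 := by rw [hq]; exact hgZval
    have hq1 : aeval q (X^2 + C a * X + C 2 : ℤ[X]) = 0 := by
      apply (algebraMap ℚ ℝ).injective
      rw [map_zero, ← Polynomial.aeval_algebraMap_apply]
      simpa using hq0
    have hqint : IsIntegral ℤ q := ⟨X^2 + C a * X + C 2, hgZmon, by rw [← aeval_def]; exact hq1⟩
    obtain ⟨k, hk⟩ := IsIntegrallyClosed.isIntegral_iff.mp hqint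
    have hkR : lam = (k:ℝ) := by
      rw [← hq, ← hk, eq_intCast]; norm_cast
    rw [hkR] at hlb hub
    have h1 : ((n:ℤ) + 1 : ℤ) < k := by exact_mod_cast hlb
    have h2 : (k:ℤ) < (n:ℤ) + 2 := by exact_mod_cast hub
    omega
  -- minpoly over ℚ
  have hintQ : IsIntegral ℚ lam := hintZ.tower_top
  have hgQmon : (X^2 + C (a:ℚ) * X + C 2 : ℚ[X]).Monic := by monicity!
  have hgQdeg : (X^2 + C (a:ℚ) * X + C 2 : ℚ[X]).natDegree = 2 := by compute_degree!
  have hgQval : aeval lam (X^2 + C (a:ℚ) * X + C 2 : ℚ[X]) = 0 := by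
    simp only [map_add, map_mul, map_pow, aeval_X, aeval_C, eq_ratCast,
      Rat.cast_intCast, Rat.cast_ofNat, map_ofNat]
    push_cast
    linear_combination hroot
  have hmq : minpoly ℚ lam = X^2 + C (a:ℚ) * X + C 2 := by
    obtain ⟨e, he⟩ := minpoly.dvd ℚ lam hgQval
    have h2 : 2 ≤ (minpoly ℚ lam).natDegree := by
      rw [minpoly.two_le_natDegree_iff hintQ]
      rintro ⟨q, hq⟩
      exact hirr ⟨q, by simpa using hq⟩
    have hmne : minpoly ℚ lam ≠ 0 := minpoly.ne_zero hintQ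
    have hene : e ≠ 0 := by
      rintro rfl
      rw [mul_zero] at he
      exact hgQmon.ne_zero he
    have hdegs := congrArg natDegree he
    rw [natDegree_mul hmne hene, hgQdeg] at hdegs
    have hedeg : e.natDegree = 0 := by omega
    have hlc := congrArg leadingCoeff he
    rw [leadingCoeff_mul, (minpoly.monic hintQ).leadingCoeff, one_mul,
      hgQmon.leadingCoeff] at hlc
    have he1 : e = 1 := by
      have hlc0 : e.leadingCoeff = e.coeff 0 := by rw [Polynomial.leadingCoeff, hedeg]
      have hc : e.coeff 0 = 1 := by rw [← hlc0]; exact hlc.symm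
      rw [eq_C_of_natDegree_eq_zero hedeg, hc, map_one]
    rw [he1, mul_one] at he
    exact he.symm
  -- minpoly over ℤ
  have hmz : minpoly ℤ lam = X^2 + C a * X + C 2 := by
    have h := minpoly.isIntegrallyClosed_eq_field_fractions' ℚ hintZ
    apply Polynomial.map_injective (algebraMap ℤ ℚ)
      (fun x y hxy => by simpa using hxy)
    rw [← h, hmq]
    rw [show map (algebraMap ℤ ℚ) (X^2 + C a * X + C (2:ℤ)) = X^2 + C (a:ℚ) * X + C 2 by
      simp [Polynomial.map_add, Polynomial.map_mul, Polynomial.map_pow,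
        Polynomial.map_X, Polynomial.map_C]
      exact (map_ofNat (C : ℚ →+* ℚ[X]) 2).symm]
  have hker : ∀ p : ℤ[X], aeval lam p = 0 → (X^2 + C a * X + C 2 : ℤ[X]) ∣ p :=
    fun p hp => hmz ▸ minpoly.isIntegrallyClosed_dvd hintZ hp
  refine ⟨hpos, hirr, hintZ, hmq, ?_⟩
  have hlammem : lam ∈ Subring.closure {lam} := Subring.subset_closure (Set.mem_singleton lam)
  set S : Subring ℝ := Subring.closure {lam} with hSdef
  set lam0 : S := (⟨lam, Subring.subset_closure (Set.mem_singleton lam)⟩ : S) with hlam0def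
  set H : AddSubgroup S := (AddMonoidHom.mulLeft (1 - lam0)).range with hHdef
  have hmem : ∀ p : ℤ[X], aeval lam p ∈ S := by
    intro p
    induction p using Polynomial.induction_on' with
    | add p q hp hq => rw [map_add]; exact S.add_mem hp hq
    | monomial k c =>
      rw [aeval_monomial]
      exact S.mul_mem (by simpa using intCast_mem S c) (S.pow_mem hlammem k)
  set π : ℤ[X] →+* S :=
    RingHom.codRestrict ((aeval lam : ℤ[X] →ₐ[ℤ] ℝ) : ℤ[X] →+* ℝ) S hmem with hπdef
  have hπ : ∀ p : ℤ[X], (π p : ℝ) = aeval lam p := fun p => rfl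
  have hπsurj : Function.Surjective π := by
    rintro ⟨z, hz⟩
    induction hz using Subring.closure_induction with
    | mem x hx =>
      refine ⟨X, Subtype.ext ?_⟩
      rw [hπ, aeval_X]
      exact (Set.eq_of_mem_singleton hx).symm
    | zero => exact ⟨0, by rw [map_zero]; exact Subtype.ext rfl⟩
    | one => exact ⟨1, by rw [map_one]; exact Subtype.ext rfl⟩
    | add x y hx hy ihx ihy =>
      obtain ⟨p, hp⟩ := ihx; obtain ⟨q2, hq2⟩ := ihy
      exact ⟨p + q2, by rw [map_add, hp, hq2]; exact Subtype.ext rfl⟩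
    | neg x hx ihx =>
      obtain ⟨p, hp⟩ := ihx
      exact ⟨-p, by rw [map_neg, hp]; exact Subtype.ext rfl⟩
    | mul x y hx hy ihx ihy =>
      obtain ⟨p, hp⟩ := ihx; obtain ⟨q2, hq2⟩ := ihy
      exact ⟨p * q2, by rw [map_mul, hp, hq2]; exact Subtype.ext rfl⟩
  set G : ℤ[X] →+ ZMod (n-1) :=
    ((Int.castRingHom (ZMod (n-1))).comp (evalRingHom 1)).toAddMonoidHom with hGdef
  have hG : ∀ p : ℤ[X], G p = ((p.eval 1 : ℤ) : ZMod (n-1)) := fun p => rfl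
  have hGsurj : Function.Surjective G := by
    intro z
    obtain ⟨k, rfl⟩ := ZMod.intCast_surjective z
    exact ⟨C k, by rw [hG, eval_C]⟩
  set q : ℤ[X] →+ (S ⧸ H) := (QuotientAddGroup.mk' H).comp π.toAddMonoidHom with hqdef
  have hqapp : ∀ p : ℤ[X], q p = QuotientAddGroup.mk' H (π p) := fun p => rfl
  have hqsurj : Function.Surjective q :=
    (QuotientAddGroup.mk'_surjective H).comp hπsurj
  have hn1 : ((n - 1 : ℕ) : ℤ) = (n : ℤ) - 1 := by omega
  have hgZ1 : (X^2 + C a * X + C 2 : ℤ[X]).eval 1 = 1 - (n:ℤ) := by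
    rw [ha]; simp; ring
  have hkereq : q.ker = G.ker := by
    ext p
    simp only [AddMonoidHom.mem_ker]
    constructor
    · intro hp
      have hp' : π p ∈ H := by
        rwa [hqapp, QuotientAddGroup.mk'_apply, QuotientAddGroup.eq_zero_iff] at hp
      obtain ⟨z, hz⟩ := hp'
      obtain ⟨r, rfl⟩ := hπsurj z
      have hre : (1 - lam) * (aeval lam r) = aeval lam p := by
        have h := congrArg Subtype.val hz
        simpa [AddMonoidHom.coe_mulLeft, hπ] using h
      have h0 : aeval lam (p - (1 - X) * r) = 0 := by
        rw [map_sub, map_mul, map_sub, map_one, aeval_X]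
        linear_combination -hre
      obtain ⟨t, ht⟩ := hker _ h0
      have h1 := congrArg (Polynomial.eval 1) ht
      rw [eval_sub, eval_mul, eval_sub, eval_one, eval_X, eval_mul, hgZ1] at h1
      rw [hG, ZMod.intCast_zmod_eq_zero_iff_dvd, hn1]
      exact ⟨- t.eval 1, by linear_combination h1⟩
    · intro hp
      rw [hG, ZMod.intCast_zmod_eq_zero_iff_dvd, hn1] at hp
      obtain ⟨k, hk⟩ := hp
      set c : ℤ := (p %ₘ (X^2 + C a * X + C 2)).coeff 0 with hcdef
      set d : ℤ := (p %ₘ (X^2 + C a * X + C 2)).coeff 1 with hddef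
      have hgne1 : (X^2 + C a * X + C 2 : ℤ[X]) ≠ 1 := fun hcon => by
        have := congrArg natDegree hcon
        have h2 : (X^2 + C a * X + C (2:ℤ)).natDegree = 2 := by compute_degree!
        rw [h2, natDegree_one] at this
        omega
      have hmoddeg : (p %ₘ (X^2 + C a * X + C 2)).natDegree ≤ 1 := by
        have hlt := natDegree_modByMonic_lt p hgZmon hgne1
        have h2 : (X^2 + C a * X + C (2:ℤ)).natDegree = 2 := by compute_degree!
        omega
      have hrem : p %ₘ (X^2 + C a * X + C 2) = C d * X + C c :=
        eq_X_add_C_of_natDegree_le_one hmoddeg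
      have hmod := modByMonic_add_div p (X^2 + C a * X + C 2)
      have heval : aeval lam p = (c:ℝ) + (d:ℝ) * lam := by
        conv_lhs => rw [← hmod]
        rw [map_add, map_mul, hgZval, zero_mul, add_zero, hrem]
        simp only [map_add, map_mul, aeval_C, aeval_X, algebraMap_int_eq, eq_intCast, map_intCast, map_ofNat, map_neg]
        ring
      set e : ℤ := (p /ₘ (X^2 + C a * X + C 2)).eval 1 with hedef
      set m : ℤ := k + e with hmdef
      have hcd : c + d = ((n:ℤ) - 1) * m := by
        have h1 := congrArg (Polynomial.eval 1) hmod
        rw [hrem, eval_add, eval_add, eval_mul, eval_mul, eval_C, eval_C, eval_X,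
          hgZ1, ← hedef] at h1
        linear_combination h1 + hk + ((n:ℤ) - 1) * hmdef
      rw [hqapp, QuotientAddGroup.mk'_apply, QuotientAddGroup.eq_zero_iff]
      refine ⟨π (C (c + 2*m) + C (-m) * X), Subtype.ext ?_⟩
      have hcdR : (c:ℝ) + (d:ℝ) = ((n:ℝ) - 1) * (m:ℝ) := by exact_mod_cast hcd
      have hfin : (1 - lam) * (((c:ℝ) + 2*(m:ℝ)) + (-(m:ℝ)) * lam) = (c:ℝ) + (d:ℝ) * lam := by
        linear_combination (m:ℝ) * hroot - lam * hcdR - lam * (m:ℝ) * haR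
      calc ((AddMonoidHom.mulLeft (1 - lam0)) (π (C (c + 2*m) + C (-m) * X)) : ℝ)
          = (1 - lam) * (((c:ℝ) + 2*(m:ℝ)) + (-(m:ℝ)) * lam) := by
            rw [AddMonoidHom.coe_mulLeft]
            push_cast
            rw [hπ]
            simp only [map_add, map_mul, aeval_C, aeval_X, algebraMap_int_eq,
              eq_intCast, map_intCast, map_ofNat, map_neg]
            try push_cast
            try ring
        _ = (c:ℝ) + (d:ℝ) * lam := hfin
        _ = (π p : ℝ) := by rw [hπ, heval]
  exact ⟨(QuotientAddGroup.quotientKerEquivOfSurjective q hqsurj).symm.trans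
    ((QuotientAddGroup.quotientAddEquivOfEq hkereq).trans
      (QuotientAddGroup.quotientKerEquivOfSurjective G hGsurj))⟩
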